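/- Let n ≥ 1, let A : Fin n → Fin n → Fin n → ℂ with A ≠ 0, and let ε be a real number with 0 < ε < (∑_{i,k,p} ‖A i k p‖²) / (2n). Define the curvature-type tensor R i j k l := (1/2) · ∑_p A i k p · conj (A j l p) − ε · (if k = j then 1 else 0) · (if i = l then 1 else 0). Then, taking ξ to be the identity matrix, Re (∑_{i,j,k,l} R i j k l · ξ i j · ξ k l) > 0; in particular, there exists a nonzero Hermitian positive semidefinite matrix ξ for which the real bisectional curvature form ∑ R i j k l · ξ i j · ξ k l has strictly positive real part, so R does not have nonpositive real bisectional curvature. -/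

import Mathlib

open scoped ComplexOrder

/-- Example 2.2 (continued): for `A ≠ 0` and `0 < ε < |A|²/(2n)`, the real bisectional
curvature form of the curvature tensor at the origin is strictly positive on the identity
matrix; in particular the real bisectional curvature is not nonpositive. -/
theorem example_RBC_not_nonpositive (n : ℕ) (hn : 1 ≤ n)
    (A : Fin n → Fin n → Fin n → ℂ) (hA : A ≠ 0) (ε : ℝ) (hε : 0 < ε)
    (hε' : ε < (∑ i : Fin n, ∑ k : Fin n, ∑ p : Fin n, ‖A i k p‖^2) / (2 * n))
    (R : Fin n → Fin n → Fin n → Fin n → ℂ)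
    (hR : ∀ i j k l : Fin n,
      R i j k l = (1/2 : ℂ) * ∑ p : Fin n, A i k p * (starRingEnd ℂ) (A j l p)
        - (ε : ℂ) * (if k = j then 1 else 0) * (if i = l then 1 else 0)) :
    0 < (∑ i : Fin n, ∑ j : Fin n, ∑ k : Fin n, ∑ l : Fin n,
        R i j k l * (1 : Matrix (Fin n) (Fin n) ℂ) i j
          * (1 : Matrix (Fin n) (Fin n) ℂ) k l).re
    ∧ ∃ ξ : Matrix (Fin n) (Fin n) ℂ, ξ ≠ 0 ∧ ξ.PosSemidef ∧
        0 < (∑ i : Fin n, ∑ j : Fin n, ∑ k : Fin n, ∑ l : Fin n,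
          R i j k l * ξ i j * ξ k l).re := by
  set S : ℝ := ∑ i : Fin n, ∑ k : Fin n, ∑ p : Fin n, ‖A i k p‖^2 with hS
  have hpos : 0 < (n : ℝ) := by exact_mod_cast hn
  have hεn : ε * n < S / 2 := by
    have := (lt_div_iff₀ (by positivity : (0:ℝ) < 2 * n)).mp hε'
    nlinarith
  have key : (∑ i : Fin n, ∑ j : Fin n, ∑ k : Fin n, ∑ l : Fin n,
      R i j k l * (1 : Matrix (Fin n) (Fin n) ℂ) i j
        * (1 : Matrix (Fin n) (Fin n) ℂ) k l) = (S/2 - ε * n : ℝ) := by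
    have h1 : (∑ i : Fin n, ∑ j : Fin n, ∑ k : Fin n, ∑ l : Fin n,
        R i j k l * (1 : Matrix (Fin n) (Fin n) ℂ) i j
          * (1 : Matrix (Fin n) (Fin n) ℂ) k l)
        = ∑ i : Fin n, ∑ k : Fin n, R i i k k := by
      simp [Matrix.one_apply, mul_ite, ite_mul, Finset.sum_ite_eq]
    rw [h1]
    have h2 : ∀ i k : Fin n, R i i k k
        = (1/2 : ℂ) * (∑ p : Fin n, (‖A i k p‖^2 : ℝ))
          - (ε : ℂ) * (if k = i then 1 else 0) := by
      intro i k
      rw [hR]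
      have hh : ∀ p : Fin n, A i k p * (starRingEnd ℂ) (A i k p) = ((‖A i k p‖^2 : ℝ) : ℂ) := by
        intro p
        rw [Complex.mul_conj, Complex.normSq_eq_norm_sq]
      simp only [hh]
      push_cast
      by_cases h : k = i <;> simp [h]
    simp only [h2, Finset.sum_sub_distrib, Finset.sum_ite_eq, Finset.mem_univ, if_true,
      mul_ite, mul_one, mul_zero]
    push_cast [hS]
    simp only [Finset.sum_mul, Finset.mul_sum, Finset.sum_ite_eq', Finset.mem_univ, if_true,
      Finset.sum_const, Finset.card_univ, Fintype.card_fin, nsmul_eq_mul]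
    push_cast
    rw [Finset.sum_div]
    rw [show ((ε:ℂ) * (n:ℂ)) = (n:ℂ) * (ε:ℂ) from mul_comm _ _]
    refine congrArg (fun t => t - (n:ℂ) * (ε:ℂ)) ?_
    refine Finset.sum_congr rfl fun x _ => ?_
    rw [Finset.sum_div]
    refine Finset.sum_congr rfl fun y _ => ?_
    rw [Finset.sum_div]
    exact Finset.sum_congr rfl fun z _ => by ring
  refine ⟨?_, 1, ?_, Matrix.PosSemidef.one, ?_⟩
  · rw [key]; simp only [Complex.ofReal_re]; linarith
  · have : Nontrivial (Matrix (Fin n) (Fin n) ℂ) := by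
      have : Nonempty (Fin n) := ⟨⟨0, hn⟩⟩
      infer_instance
    exact one_ne_zero
  · rw [key]; simp only [Complex.ofReal_re]; linarith
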